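/- Let X be a separable metric space with its Borel σ-algebra, μ a Borel probability measure on X, and f : X → X a Borel-measurable bijection with Borel-measurable inverse such that μ is ergodic for f (every Borel set E with f⁻¹(E) = E has μ(E) ∈ {0,1}). Let ℙ = {O(x) : x ∈ X} be the partition of X into full orbits O(x) = {f^n(x) : n ∈ ℤ}. Then ℙ is a measurable partition for μ if and only if there exists x ∈ X whose orbit O(x) has μ(O(x)) = 1. -/

import Mathlib

open MeasureTheory Filter Set Topology

namespace ErgodicDecomposition

variable {X : Type*}

/-- `ℙ` is a partition of `X`: every point lies in exactly one element of `ℙ`. -/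
def IsPartition (ℙ : Set (Set X)) : Prop := ∀ x : X, ∃! P, P ∈ ℙ ∧ x ∈ P

open Classical in
/-- The element of `ℙ` containing `x` (with junk value `∅` if there is none);
this is the canonical projection `τ̂ : X → ℙ`. -/
noncomputable def partOf (ℙ : Set (Set X)) (x : X) : Set X :=
  if h : ∃ P, P ∈ ℙ ∧ x ∈ P then h.choose else ∅

/-- `ν` is a disintegration of `μ` with respect to the partition `ℙ`.  All statements about
the quotient space `ℙ` (its σ-algebra, the quotient measure `μ̂`, measurability of
`P ↦ μ_P(E)` and integration against `μ̂`) are expressed, equivalently, after pulling back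
along the canonical projection `x ↦ partOf ℙ x`, since the σ-algebra of `ℙ` is by definition
the pushforward σ-algebra and `μ̂` is the pushforward measure. -/
def IsDisintegration [MeasurableSpace X] (μ : Measure X) (ℙ : Set (Set X))
    (ν : Set X → Measure X) : Prop :=
  (∀ P ∈ ℙ, IsProbabilityMeasure (ν P)) ∧
  (∀ᵐ x ∂μ, ν (partOf ℙ x) (partOf ℙ x) = 1) ∧
  (∀ E : Set X, MeasurableSet E →
    Measurable (fun x => ν (partOf ℙ x) E) ∧ μ E = ∫⁻ x, ν (partOf ℙ x) E ∂μ)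

/-- `ℙ` is a measurable partition for `μ`: a partition of `X` into measurable sets such that
there are a full measure set `X₀` and a refining sequence of countable partitions `Ps n` into
measurable sets with `P(x) = ⋂ n, P_n(x)` for every `x ∈ X₀`. -/
def IsMeasurablePartition [MeasurableSpace X] (μ : Measure X) (ℙ : Set (Set X)) : Prop :=
  IsPartition ℙ ∧ (∀ P ∈ ℙ, MeasurableSet P) ∧
  ∃ X₀ : Set X, MeasurableSet X₀ ∧ μ X₀ = 1 ∧
  ∃ Ps : ℕ → Set (Set X),
    (∀ n, (Ps n).Countable) ∧
    (∀ n, IsPartition (Ps n)) ∧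
    (∀ n, ∀ P ∈ Ps n, MeasurableSet P) ∧
    (∀ n, ∀ B ∈ Ps (n + 1), ∃ A ∈ Ps n, B ⊆ A) ∧
    (∀ x ∈ X₀, partOf ℙ x = ⋂ n, partOf (Ps n) x)

open Classical in
/-- `τ(x, A)`: the lim-inf of the asymptotic frequency of visits of the orbit of `x` to `A`. -/
noncomputable def visitFreq (f : X → X) (A : Set X) (x : X) : ℝ :=
  atTop.liminf fun n : ℕ =>
    (((Finset.range n).filter fun i => f^[i] x ∈ A).card : ℝ) / n

/-- The equivalence class of `x` for the relation `x ∼ y ↔ τ(x,A) = τ(y,A)` for all `A ∈ 𝒜₀`. -/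
def dynClass (f : X → X) (𝒜₀ : Set (Set X)) (x : X) : Set X :=
  {y | ∀ A ∈ 𝒜₀, visitFreq f A y = visitFreq f A x}

/-- The dynamical partition of `X` with respect to `f` and the countable algebra `𝒜₀`. -/
def dynPartition (f : X → X) (𝒜₀ : Set (Set X)) : Set (Set X) :=
  {P | ∃ x : X, P = dynClass f 𝒜₀ x}


/-- The full orbit `O(x) = {fⁿ(x) : n ∈ ℤ}` of a point under a bimeasurable bijection. -/
def fullOrbit {X : Type*} (f : X ≃ X) (x : X) : Set X :=
  Set.range fun n : ℤ => (f ^ n) x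

lemma partOf_eq {ℙ : Set (Set X)} (h : IsPartition ℙ) {P : Set X} {x : X}
    (hP : P ∈ ℙ) (hx : x ∈ P) : partOf ℙ x = P := by
  have he : ∃ Q, Q ∈ ℙ ∧ x ∈ Q := ⟨P, hP, hx⟩
  rw [partOf, dif_pos he]
  exact (h x).unique he.choose_spec ⟨hP, hx⟩

lemma mem_fullOrbit_self (f : X ≃ X) (x : X) : x ∈ fullOrbit f x :=
  ⟨0, by simp⟩

lemma fullOrbit_eq_of_mem (f : X ≃ X) {x y : X} (h : y ∈ fullOrbit f x) :
    fullOrbit f y = fullOrbit f x := by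
  obtain ⟨n, rfl⟩ := h
  ext z
  constructor
  · rintro ⟨m, rfl⟩
    refine ⟨m + n, ?_⟩
    show (f ^ (m + n)) x = (f ^ m) ((f ^ n) x)
    rw [zpow_add, Equiv.Perm.mul_apply]
  · rintro ⟨m, rfl⟩
    refine ⟨m - n, ?_⟩
    show (f ^ (m - n)) ((f ^ n) x) = (f ^ m) x
    rw [← Equiv.Perm.mul_apply, ← zpow_add, sub_add_cancel]

lemma isPartition_orbits (f : X ≃ X) :
    IsPartition {P | ∃ x : X, P = fullOrbit f x} := by
  intro x
  refine ⟨fullOrbit f x, ⟨⟨x, rfl⟩, mem_fullOrbit_self f x⟩, ?_⟩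
  rintro P ⟨⟨y, rfl⟩, hx⟩
  exact (fullOrbit_eq_of_mem f hx).symm

lemma measurable_zpow [MeasurableSpace X] (f : X ≃ X) (hf : Measurable f)
    (hfsymm : Measurable f.symm) : ∀ k : ℤ, Measurable ⇑(f ^ k) := by
  intro k
  induction k using Int.induction_on with
  | zero => simpa using measurable_id
  | succ n ih =>
      have h : (f ^ ((n : ℤ) + 1)) = f ^ (n : ℤ) * f := by rw [zpow_add, zpow_one]
      rw [h]
      exact ih.comp hf
  | pred n ih =>
      have h : (f ^ (-(n : ℤ) - 1)) = f ^ (-(n : ℤ)) * f⁻¹ := by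
        rw [zpow_sub, zpow_one]
      rw [h]
      exact ih.comp hfsymm

/-- for an ergodic bimeasurable bijection of a separable metric space, the
partition into full orbits is a measurable partition for `μ` iff some orbit has full
measure. -/
theorem orbit_partition_measurable_iff {X : Type*} [MetricSpace X]
    [TopologicalSpace.SeparableSpace X] [MeasurableSpace X] [BorelSpace X]
    (μ : Measure X) [IsProbabilityMeasure μ]
    (f : X ≃ X) (hf : Measurable f) (hfsymm : Measurable f.symm)
    (herg : ∀ E : Set X, MeasurableSet E → ⇑f ⁻¹' E = E → μ E = 0 ∨ μ E = 1) :
    IsMeasurablePartition μ {P | ∃ x : X, P = fullOrbit f x} ↔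
      ∃ x : X, μ (fullOrbit f x) = 1 := by
  set ℙ : Set (Set X) := {P | ∃ x : X, P = fullOrbit f x} with hℙ
  have hpart : IsPartition ℙ := isPartition_orbits f
  have horbmeas : ∀ y : X, MeasurableSet (fullOrbit f y) := fun y =>
    (Set.countable_range _).measurableSet
  -- core of a set: the largest strictly invariant subset
  set core : Set X → Set X := fun P => ⋂ k : ℤ, ⇑(f ^ k) ⁻¹' P with hcore
  have hcore_meas : ∀ P : Set X, MeasurableSet P → MeasurableSet (core P) := by
    intro P hP
    exact MeasurableSet.iInter fun k => (measurable_zpow f hf hfsymm k) hP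
  have hcore_inv : ∀ P : Set X, ⇑f ⁻¹' core P = core P := by
    intro P
    ext y
    simp only [hcore, mem_preimage, mem_iInter]
    constructor
    · intro h k
      have := h (k - 1)
      have hk : (f ^ k) y = (f ^ (k - 1)) (f y) := by
        rw [← Equiv.Perm.mul_apply, ← zpow_add_one, sub_add_cancel]
      rw [hk]; exact this
    · intro h k
      have := h (k + 1)
      have hk : (f ^ k) (f y) = (f ^ (k + 1)) y := by
        rw [zpow_add_one, Equiv.Perm.mul_apply]
      rw [hk]; exact this
  have hcore_sub : ∀ P : Set X, core P ⊆ P := by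
    intro P y hy
    have := Set.mem_iInter.1 hy 0
    simpa using this
  constructor
  · -- forward direction
    rintro ⟨_, _, X₀, hX₀m, hX₀, Ps, hcnt, hPspart, hPsmeas, _, hInt⟩
    -- for each n there is an element of `Ps n` whose core has full measure
    have hex : ∀ n : ℕ, ∃ P ∈ Ps n, μ (core P) = 1 := by
      intro n
      by_contra hcon
      push_neg at hcon
      have hall0 : ∀ P ∈ Ps n, μ (core P) = 0 := by
        intro P hP
        rcases herg (core P) (hcore_meas P (hPsmeas n P hP)) (hcore_inv P) with h0 | h1
        · exact h0
        · exact absurd h1 (hcon P hP)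
      have hsub : X₀ ⊆ ⋃ P ∈ Ps n, core P := by
        intro x hx
        have hxorb : partOf ℙ x = fullOrbit f x :=
          partOf_eq hpart ⟨x, rfl⟩ (mem_fullOrbit_self f x)
        have hmemn : partOf (Ps n) x ∈ Ps n ∧ x ∈ partOf (Ps n) x := by
          obtain ⟨P, hP, -⟩ := hPspart n x
          rw [partOf_eq (hPspart n) hP.1 hP.2]
          exact hP
        have horb_sub : fullOrbit f x ⊆ partOf (Ps n) x := by
          rw [← hxorb, hInt x hx]
          exact Set.iInter_subset _ n
        refine Set.mem_biUnion hmemn.1 ?_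
        refine Set.mem_iInter.2 fun k => ?_
        exact horb_sub ⟨k, rfl⟩
      have h0 : μ (⋃ P ∈ Ps n, core P) = 0 :=
        (measure_biUnion_null_iff (hcnt n)).2 hall0
      have h1 : (1 : ENNReal) ≤ μ (⋃ P ∈ Ps n, core P) := hX₀ ▸ measure_mono hsub
      rw [h0] at h1
      exact absurd h1 (by simp)
    choose Pn hPn hPn1 using hex
    set Y : Set X := X₀ ∩ ⋂ n, core (Pn n) with hY
    have hYmeas : MeasurableSet Y :=
      hX₀m.inter (MeasurableSet.iInter fun n =>
        hcore_meas _ (hPsmeas n _ (hPn n)))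
    have hYfull : μ Y = 1 := by
      have h1 : μ Yᶜ = 0 := by
        have : Yᶜ = X₀ᶜ ∪ ⋃ n, (core (Pn n))ᶜ := by
          rw [hY, Set.compl_inter, Set.compl_iInter]
        rw [this]
        refine measure_union_null ?_ (measure_iUnion_null fun n => ?_)
        · exact (prob_compl_eq_zero_iff hX₀m).2 hX₀
        · exact (prob_compl_eq_zero_iff
            (hcore_meas _ (hPsmeas n _ (hPn n)))).2 (hPn1 n)
      have := prob_compl_eq_zero_iff (μ := μ) hYmeas
      exact this.1 h1
    have hYne : Y.Nonempty := by
      rw [Set.nonempty_iff_ne_empty]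
      intro h
      rw [h] at hYfull
      simp at hYfull
    obtain ⟨x, hxY⟩ := hYne
    refine ⟨x, ?_⟩
    have hxX₀ : x ∈ X₀ := hxY.1
    have hxPn : ∀ n, x ∈ Pn n := fun n =>
      hcore_sub _ (Set.mem_iInter.1 hxY.2 n)
    have hOx : fullOrbit f x = ⋂ n, Pn n := by
      have hxorb : partOf ℙ x = fullOrbit f x :=
        partOf_eq hpart ⟨x, rfl⟩ (mem_fullOrbit_self f x)
      rw [← hxorb, hInt x hxX₀]
      exact Set.iInter_congr fun n =>
        partOf_eq (hPspart n) (hPn n) (hxPn n)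
    have hYsub : Y ⊆ fullOrbit f x := by
      intro y hy
      rw [hOx]
      exact Set.mem_iInter.2 fun n => hcore_sub _ (Set.mem_iInter.1 hy.2 n)
    refine le_antisymm prob_le_one ?_
    calc (1 : ENNReal) = μ Y := hYfull.symm
    _ ≤ μ (fullOrbit f x) := measure_mono hYsub
  · -- backward direction
    rintro ⟨x₀, hx₀⟩
    refine ⟨hpart, ?_, fullOrbit f x₀, horbmeas x₀, hx₀, fun _ =>
      {fullOrbit f x₀, (fullOrbit f x₀)ᶜ}, ?_, ?_, ?_, ?_, ?_⟩
    · rintro P ⟨y, rfl⟩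
      exact horbmeas y
    · intro n
      exact (Set.countable_singleton _).insert _
    · intro n x
      by_cases hx : x ∈ fullOrbit f x₀
      · refine ⟨fullOrbit f x₀, ⟨Set.mem_insert _ _, hx⟩, ?_⟩
        rintro P ⟨hP, hxP⟩
        rcases hP with rfl | hP
        · rfl
        · rw [Set.mem_singleton_iff] at hP
          subst hP
          exact absurd hx hxP
      · refine ⟨(fullOrbit f x₀)ᶜ, ⟨Set.mem_insert_of_mem _ rfl, hx⟩, ?_⟩
        rintro P ⟨hP, hxP⟩
        rcases hP with rfl | hP
        · exact absurd hxP hx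
        · rwa [Set.mem_singleton_iff] at hP
    · rintro n P (rfl | hP)
      · exact horbmeas x₀
      · rw [Set.mem_singleton_iff] at hP
        subst hP
        exact (horbmeas x₀).compl
    · intro n B hB
      exact ⟨B, hB, subset_rfl⟩
    · intro x hx
      have hPs : IsPartition ({fullOrbit f x₀, (fullOrbit f x₀)ᶜ} : Set (Set X)) := by
        intro y
        by_cases hy : y ∈ fullOrbit f x₀
        · refine ⟨fullOrbit f x₀, ⟨Set.mem_insert _ _, hy⟩, ?_⟩
          rintro P ⟨hP, hyP⟩
          rcases hP with rfl | hP
          · rfl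
          · rw [Set.mem_singleton_iff] at hP
            subst hP
            exact absurd hy hyP
        · refine ⟨(fullOrbit f x₀)ᶜ, ⟨Set.mem_insert_of_mem _ rfl, hy⟩, ?_⟩
          rintro P ⟨hP, hyP⟩
          rcases hP with rfl | hP
          · exact absurd hyP hy
          · rwa [Set.mem_singleton_iff] at hP
      have h1 : partOf ℙ x = fullOrbit f x₀ := by
        rw [partOf_eq hpart ⟨x, rfl⟩ (mem_fullOrbit_self f x)]
        exact fullOrbit_eq_of_mem f hx
      have h2 : ∀ n : ℕ, partOf ({fullOrbit f x₀, (fullOrbit f x₀)ᶜ} : Set (Set X)) x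
          = fullOrbit f x₀ := fun n =>
        partOf_eq hPs (Set.mem_insert _ _) hx
      rw [h1]
      simp only [h2, Set.iInter_const]
      exact (h2 0).symm

end ErgodicDecomposition
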